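/- Let p be a prime, N ≥ 1, and e_1,…,e_N integers. Then there exists a constant C_1 (depending only on N and the e_i) such that: for every tuple of integers u_1,…,u_N satisfying (i) the sum ∑_{i=1}^N e_i p^{u_i} is a nonzero integer, and (ii) no nonempty proper subset J ⊂ {1,…,N} satisfies ∑_{i∈J} e_i p^{u_i} = 0, we have u_i + C_1 ≥ 0 for every 1 ≤ i ≤ N. -/

import Mathlib

theorem vp_zpow (p : ℕ) (hp : p.Prime) (m : ℤ) : padicValRat p ((p:ℚ) ^ m) = m := by
  haveI : Fact p.Prime := ⟨hp⟩
  rcases m with n | n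
  · rw [Int.ofNat_eq_coe, zpow_natCast, padicValRat.pow,
      padicValRat.self hp.one_lt]; ring
  · rw [Int.negSucc_eq, zpow_neg, padicValRat.inv,
      show ((n:ℤ)+1) = ((n+1 : ℕ) : ℤ) by push_cast; ring, zpow_natCast,
      padicValRat.pow, padicValRat.self hp.one_lt]
    push_cast; ring

theorem vp_int_mul_zpow (p : ℕ) (hp : p.Prime) (a : ℤ) (ha : a ≠ 0) (m : ℤ) :
    padicValRat p ((a:ℚ) * (p:ℚ) ^ m) = padicValInt p a + m := by
  haveI : Fact p.Prime := ⟨hp⟩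
  rw [padicValRat.mul (by exact_mod_cast ha)
    (zpow_ne_zero _ (by exact_mod_cast hp.ne_zero)), vp_zpow p hp, padicValRat.of_int]

theorem vp_sum_le (p : ℕ) (hp : p.Prime) {ι : Type*} [DecidableEq ι] (s : Finset ι)
    (hs : s.Nonempty) (e : ι → ℤ) (u : ι → ℤ) (t : ℤ) (hu : ∀ i ∈ s, u i ≤ t)
    (h0 : (∑ i ∈ s, (e i : ℚ) * (p:ℚ) ^ (u i)) ≠ 0) :
    padicValRat p (∑ i ∈ s, (e i : ℚ) * (p:ℚ) ^ (u i)) ≤ t + ∑ i ∈ s, |e i| := by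
  haveI : Fact p.Prime := ⟨hp⟩
  have hp0 : (p:ℚ) ≠ 0 := by exact_mod_cast hp.ne_zero
  have hp1 : (1:ℤ) < (p:ℤ) := by exact_mod_cast hp.one_lt
  set m := (s.image u).min' (hs.image u) with hm
  obtain ⟨i₀, hi₀s, hi₀⟩ := Finset.mem_image.mp ((s.image u).min'_mem (hs.image u))
  have hmle : ∀ i ∈ s, m ≤ u i := fun i hi =>
    Finset.min'_le _ _ (Finset.mem_image_of_mem u hi)
  have hmt : m ≤ t := by rw [hm, ← hi₀]; exact hu i₀ hi₀s
  set B : ℤ := ∑ i ∈ s, e i * (p:ℤ) ^ ((u i - m).toNat) with hB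
  have hBcast : (B : ℚ) = ∑ i ∈ s, (e i : ℚ) * (p:ℚ) ^ (u i - m) := by
    rw [hB]; push_cast
    refine Finset.sum_congr rfl fun i hi => ?_
    rw [← zpow_natCast (p:ℚ), Int.toNat_of_nonneg (by linarith [hmle i hi])]
  have hfac : (∑ i ∈ s, (e i : ℚ) * (p:ℚ) ^ (u i)) = (p:ℚ)^m * B := by
    rw [hBcast, Finset.mul_sum]
    refine Finset.sum_congr rfl fun i hi => ?_
    have hz : (p:ℚ)^m * (p:ℚ)^(u i - m) = (p:ℚ)^(u i) := by
      rw [← zpow_add₀ hp0]; congr 1; ring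
    rw [← hz]; ring
  have hBne : B ≠ 0 := by
    intro h; apply h0; rw [hfac, h]; simp
  set E : ℤ := ∑ i ∈ s, |e i| with hE
  have hE0 : 0 ≤ E := Finset.sum_nonneg fun i _ => abs_nonneg _
  have hBabs : |B| ≤ E * (p:ℤ) ^ ((t - m).toNat) := by
    calc |B| ≤ ∑ i ∈ s, |e i * (p:ℤ) ^ ((u i - m).toNat)| := Finset.abs_sum_le_sum_abs _ _
    _ ≤ ∑ i ∈ s, |e i| * (p:ℤ) ^ ((t - m).toNat) := by
        refine Finset.sum_le_sum fun i hi => ?_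
        rw [abs_mul, abs_pow, abs_of_nonneg (by positivity : (0:ℤ) ≤ (p:ℤ))]
        refine mul_le_mul_of_nonneg_left ?_ (abs_nonneg _)
        refine pow_le_pow_right₀ (by linarith) ?_
        have h1 := hu i hi; have h2 := hmle i hi; omega
    _ = E * (p:ℤ) ^ ((t - m).toNat) := by rw [← Finset.sum_mul]
  have hEpow : E ≤ (p:ℤ) ^ E.toNat := by
    calc E = (E.toNat : ℤ) := (Int.toNat_of_nonneg hE0).symm
    _ ≤ ((2 ^ E.toNat : ℕ) : ℤ) := by exact_mod_cast (Nat.lt_two_pow_self (n := E.toNat)).le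
    _ ≤ (((p:ℕ) ^ E.toNat : ℕ) : ℤ) := by
        exact_mod_cast Nat.pow_le_pow_left hp.two_le E.toNat
    _ = (p:ℤ) ^ E.toNat := by push_cast; ring
  set v := padicValInt p B with hv
  have hdvd : (p:ℤ) ^ v ≤ |B| :=
    Int.le_of_dvd (abs_pos.mpr hBne) ((dvd_abs _ _).mpr (padicValInt_dvd B))
  have hvle : v ≤ E.toNat + (t - m).toNat := by
    have hchain : (p:ℤ) ^ v ≤ (p:ℤ) ^ (E.toNat + (t - m).toNat) := by
      calc (p:ℤ) ^ v ≤ |B| := hdvd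
      _ ≤ E * (p:ℤ) ^ ((t - m).toNat) := hBabs
      _ ≤ (p:ℤ) ^ E.toNat * (p:ℤ) ^ ((t - m).toNat) :=
          mul_le_mul_of_nonneg_right hEpow (by positivity)
      _ = (p:ℤ) ^ (E.toNat + (t - m).toNat) := (pow_add _ _ _).symm
    exact (pow_le_pow_iff_right₀ hp1).mp hchain
  have hval : padicValRat p (∑ i ∈ s, (e i : ℚ) * (p:ℚ) ^ (u i)) = m + v := by
    rw [hfac, padicValRat.mul (zpow_ne_zero _ hp0) (by exact_mod_cast hBne),
      vp_zpow p hp, padicValRat.of_int]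
  rw [hval]
  have h1 : ((t - m).toNat : ℤ) = t - m := Int.toNat_of_nonneg (by linarith)
  have h2 : (E.toNat : ℤ) = E := Int.toNat_of_nonneg hE0
  have : (v : ℤ) ≤ (E.toNat : ℤ) + ((t-m).toNat : ℤ) := by exact_mod_cast hvle
  omega

/-- Lemma on exponential sums: there is a constant `C₁` such that any tuple
`u : Fin N → ℤ` with `∑ eᵢ p^{uᵢ}` a nonzero integer and no vanishing nonempty
proper subsum satisfies `uᵢ + C₁ ≥ 0` for all `i`. -/
theorem stmt_0 (p : ℕ) (hp : p.Prime) (N : ℕ) (hN : 1 ≤ N) (e : Fin N → ℤ) :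
    ∃ C₁ : ℤ, ∀ u : Fin N → ℤ,
      (∃ z : ℤ, z ≠ 0 ∧ (∑ i, (e i : ℚ) * (p : ℚ) ^ (u i)) = (z : ℚ)) →
      (∀ J : Finset (Fin N), J.Nonempty → J ≠ Finset.univ →
        (∑ i ∈ J, (e i : ℚ) * (p : ℚ) ^ (u i)) ≠ 0) →
      ∀ i, u i + C₁ ≥ 0 := by
  haveI : Fact p.Prime := ⟨hp⟩
  have hp0 : (p:ℚ) ≠ 0 := by exact_mod_cast hp.ne_zero
  haveI hne : Nonempty (Fin N) := ⟨⟨0, hN⟩⟩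
  set E : ℤ := ∑ i, |e i| with hE
  have hE0 : 0 ≤ E := Finset.sum_nonneg fun i _ => abs_nonneg _
  refine ⟨(N:ℤ) * E, ?_⟩
  rintro u ⟨z, hz, hzsum⟩ hsub i
  set A : ℤ → ℚ :=
    fun t => ∑ j ∈ Finset.univ.filter (fun j => u j ≤ t), (e j : ℚ) * (p:ℚ)^(u j) with hA
  set W := (Finset.univ.image u).max' (Finset.Nonempty.image Finset.univ_nonempty u) with hW
  have hWle : ∀ j, u j ≤ W := fun j =>
    Finset.le_max' _ _ (Finset.mem_image_of_mem u (Finset.mem_univ j))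
  have hAz : ∀ t, W ≤ t → A t = z := by
    intro t ht
    rw [hA]
    simp only
    rw [Finset.filter_true_of_mem (fun j _ => le_trans (hWle j) ht), hzsum]
  have hAstep : ∀ t : ℤ, A (t+1) = A t +
      ((∑ j ∈ Finset.univ.filter (fun j => u j = t+1), e j : ℤ) : ℚ) * (p:ℚ)^(t+1) := by
    intro t
    have hset : Finset.univ.filter (fun j => u j ≤ t+1) =
        Finset.univ.filter (fun j => u j ≤ t) ∪ Finset.univ.filter (fun j => u j = t+1) := by
      ext j; simp only [Finset.mem_filter, Finset.mem_union, Finset.mem_univ, true_and]; omega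
    have hdisj : Disjoint (Finset.univ.filter (fun j => u j ≤ t))
        (Finset.univ.filter (fun j => u j = t+1)) := by
      rw [Finset.disjoint_left]
      intro a ha hb
      simp only [Finset.mem_filter, Finset.mem_univ, true_and] at ha hb
      omega
    rw [hA]
    simp only
    rw [hset, Finset.sum_union hdisj]
    congr 1
    rw [Int.cast_sum, Finset.sum_mul]
    refine Finset.sum_congr rfl fun j hj => ?_
    simp only [Finset.mem_filter, Finset.mem_univ, true_and] at hj
    rw [hj]
  -- L1 : lower bound on valuation
  have key : ∀ n : ℕ, ∀ t : ℤ, W - n ≤ t → A t ≠ 0 →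
      min 0 (t+1) ≤ padicValRat p (A t) := by
    intro n
    induction n with
    | zero =>
      intro t ht hAt
      rw [hAz t (by omega), padicValRat.of_int]
      exact le_trans (min_le_left _ _) (Int.ofNat_nonneg _)
    | succ n IH =>
      intro t ht hAt
      by_cases hcase : W - n ≤ t
      · exact IH t hcase hAt
      set T : ℤ := ∑ j ∈ Finset.univ.filter (fun j => u j = t+1), e j with hT
      have hst : A (t+1) = A t + (T:ℚ) * (p:ℚ)^(t+1) := by rw [hAstep t, hT]
      by_cases hT0 : T = 0
      · have heq : A (t+1) = A t := by rw [hst, hT0]; simp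
        have := IH (t+1) (by omega) (by rw [heq]; exact hAt)
        rw [heq] at this
        refine le_trans ?_ this
        simp only [le_min_iff, min_le_iff]
        omega
      · have hvT : (t+1 : ℤ) ≤ padicValRat p ((T:ℚ) * (p:ℚ)^(t+1)) := by
          rw [vp_int_mul_zpow p hp T hT0]
          have : (0:ℤ) ≤ padicValInt p T := Int.ofNat_nonneg _
          omega
        have hTne : ((T:ℚ) * (p:ℚ)^(t+1)) ≠ 0 :=
          mul_ne_zero (by exact_mod_cast hT0) (zpow_ne_zero _ hp0)
        by_cases hA1 : A (t+1) = 0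
        · have heq : A t = -((T:ℚ) * (p:ℚ)^(t+1)) := by
            rw [eq_neg_iff_add_eq_zero, ← hst, hA1]
          rw [heq, padicValRat.neg]
          simp only [min_le_iff]
          omega
        · have hAt' : A (t+1) + (-((T:ℚ) * (p:ℚ)^(t+1))) = A t := by rw [hst]; ring
          have hmin := padicValRat.min_le_padicValRat_add (p := p)
            (q := A (t+1)) (r := -((T:ℚ) * (p:ℚ)^(t+1))) (by rw [hAt']; exact hAt)
          rw [hAt', padicValRat.neg] at hmin
          have h1 := IH (t+1) (by omega) hA1
          refine le_trans ?_ hmin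
          simp only [le_min_iff, min_le_iff] at h1 ⊢
          omega
  have L1 : ∀ t : ℤ, A t ≠ 0 → min 0 (t+1) ≤ padicValRat p (A t) := fun t h =>
    key (W - t).toNat t (by omega) h
  -- A is nonzero whenever its index set is nonempty
  have hAne : ∀ t : ℤ, (∃ j, u j ≤ t) → A t ≠ 0 := by
    rintro t ⟨j, hj⟩
    by_cases hu : Finset.univ.filter (fun j => u j ≤ t) = Finset.univ
    · rw [hA]; simp only; rw [hu, hzsum]; exact_mod_cast hz
    · exact hsub _ ⟨j, Finset.mem_filter.mpr ⟨Finset.mem_univ j, hj⟩⟩ hu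
  -- L2 : upper bound on valuation
  have L2 : ∀ t : ℤ, (∃ j, u j ≤ t) → padicValRat p (A t) ≤ t + E := by
    rintro t ⟨j, hj⟩
    have hsle := vp_sum_le p hp (Finset.univ.filter (fun j => u j ≤ t))
      ⟨j, Finset.mem_filter.mpr ⟨Finset.mem_univ j, hj⟩⟩ e u t
      (fun i hi => (Finset.mem_filter.mp hi).2) (hAne t ⟨j, hj⟩)
    refine le_trans hsle ?_
    have : (∑ i ∈ Finset.univ.filter (fun j => u j ≤ t), |e i|) ≤ E :=
      Finset.sum_le_sum_of_subset_of_nonneg (Finset.filter_subset _ _)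
        (fun i _ _ => abs_nonneg _)
    omega
  -- main descent by strong induction
  have main : ∀ n : ℕ, ∀ i : Fin N,
      (Finset.univ.filter (fun j => u i < u j)).card = n → -(((n:ℤ)+1) * E) ≤ u i := by
    intro n
    induction n using Nat.strong_induction_on with
    | _ n IH =>
      intro i hcard
      set F := Finset.univ.filter (fun j => u i < u j) with hF
      by_cases hFne : F.Nonempty
      · obtain ⟨j₀, hj₀F, hj₀⟩ := Finset.mem_image.mp
          ((F.image u).min'_mem (hFne.image u))
        have hij₀ : u i < u j₀ := (Finset.mem_filter.mp hj₀F).2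
        have hmin : ∀ j ∈ F, u j₀ ≤ u j := by
          intro j hj
          rw [hj₀]
          exact Finset.min'_le _ _ (Finset.mem_image_of_mem u hj)
        have hss : Finset.univ.filter (fun j => u j₀ < u j) ⊂ F := by
          constructor
          · intro j hj
            simp only [hF, Finset.mem_filter, Finset.mem_univ, true_and] at hj ⊢
            omega
          · intro hcontra
            have := hcontra hj₀F
            simp only [Finset.mem_filter, Finset.mem_univ, true_and] at this
            omega
        have hcard' : (Finset.univ.filter (fun j => u j₀ < u j)).card < n := by
          rw [← hcard]; exact Finset.card_lt_card hss
        have hIH := IH _ hcard' j₀ rfl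
        have hj₀low : -((n:ℤ) * E) ≤ u j₀ := by
          refine le_trans ?_ hIH
          have h1 : ((Finset.univ.filter (fun j => u j₀ < u j)).card : ℤ) + 1 ≤ n := by
            exact_mod_cast hcard'
          nlinarith [hE0]
        -- A (u i) = A (u j₀ - 1)
        have hfilt : Finset.univ.filter (fun j => u j ≤ u i) =
            Finset.univ.filter (fun j => u j ≤ u j₀ - 1) := by
          ext j
          simp only [Finset.mem_filter, Finset.mem_univ, true_and]
          constructor
          · intro h; omega
          · intro h
            by_contra hcon
            push_neg at hcon
            have hjF : j ∈ F := Finset.mem_filter.mpr ⟨Finset.mem_univ j, hcon⟩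
            have := hmin j hjF
            omega
        have hAeq : A (u i) = A (u j₀ - 1) := by
          rw [hA]; simp only; rw [hfilt]
        have hAn0 : A (u i) ≠ 0 := hAne _ ⟨i, le_refl _⟩
        have hlow := L1 (u j₀ - 1) (by rw [← hAeq]; exact hAn0)
        rw [← hAeq] at hlow
        have hup := L2 (u i) ⟨i, le_refl _⟩
        have hminlow : -((n:ℤ) * E) ≤ min 0 (u j₀ - 1 + 1) := by
          refine le_min (by nlinarith [hE0]) (by linarith [hj₀low])
        nlinarith [hE0]
      · -- no larger element : A (u i) is the full sum
        have hfull : Finset.univ.filter (fun j => u j ≤ u i) = Finset.univ := by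
          rw [Finset.filter_true_of_mem]
          intro j _
          by_contra hcon
          exact hFne ⟨j, Finset.mem_filter.mpr ⟨Finset.mem_univ j, by omega⟩⟩
        have hAeq : A (u i) = (z : ℚ) := by rw [hA]; simp only; rw [hfull, hzsum]
        have h0le : (0:ℤ) ≤ padicValRat p (A (u i)) := by
          rw [hAeq, padicValRat.of_int]; exact Int.ofNat_nonneg _
        have hup := L2 (u i) ⟨i, le_refl _⟩
        nlinarith [hE0]
  have hci := main _ i rfl
  have hcardle : ((Finset.univ.filter (fun j => u i < u j)).card : ℤ) + 1 ≤ N := by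
    have hsub' : Finset.univ.filter (fun j => u i < u j) ⊆ Finset.univ.erase i := by
      intro j hj
      simp only [Finset.mem_filter, Finset.mem_univ, true_and] at hj
      refine Finset.mem_erase.mpr ⟨?_, Finset.mem_univ j⟩
      intro h; rw [h] at hj; omega
    have := Finset.card_le_card hsub'
    rw [Finset.card_erase_of_mem (Finset.mem_univ i), Finset.card_univ, Fintype.card_fin] at this
    omega
  have : -((N:ℤ) * E) ≤ u i := by
    refine le_trans ?_ hci
    nlinarith [hE0]
  omega
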